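/- Let α, τ ∈ ℝ with α² + τ ≥ 0, and let p, υ₁, υ₂ ∈ ℝ with υ₁² − 2υ₂p ≥ 0. Define ψ(x) = (p/2)x² + υ₁x + υ₂, a₁ = √(α² + τ), and a₂ = √((α² + τ)(υ₁² − 2υ₂p)). Then the function F(x) = a₁·ψ′(x)/ψ(x) + a₂/ψ(x) satisfies (τ + α²)·F‴(x) − (3/2)·F′(x)·F(x)² = 0 at every x ∈ ℝ with ψ(x) ≠ 0. -/

import Mathlib

/-- The simplest-equation ansatz function `ψ(x) = (p/2)x² + υ₁ x + υ₂`. -/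
noncomputable def ψrat (p υ₁ υ₂ : ℝ) : ℝ → ℝ :=
  fun x => (p / 2) * x ^ 2 + υ₁ * x + υ₂

/-- The rational profile `F(x) = a₁ ψ′(x)/ψ(x) + a₂/ψ(x)` with
`a₁ = √(α²+τ)` and `a₂ = √((α²+τ)(υ₁² − 2υ₂p))`. -/
noncomputable def Frat (α τ p υ₁ υ₂ : ℝ) : ℝ → ℝ :=
  fun x => Real.sqrt (α ^ 2 + τ) * deriv (ψrat p υ₁ υ₂) x / ψrat p υ₁ υ₂ x
    + Real.sqrt ((α ^ 2 + τ) * (υ₁ ^ 2 - 2 * υ₂ * p)) / ψrat p υ₁ υ₂ x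

lemma ψrat_hasDeriv (p υ₁ υ₂ x : ℝ) :
    HasDerivAt (ψrat p υ₁ υ₂) (p * x + υ₁) x := by
  have h : HasDerivAt (fun y : ℝ => (p / 2) * y ^ 2 + υ₁ * y + υ₂)
      ((p / 2) * (2 * x ^ 1) + υ₁ * 1) x :=
    (((hasDerivAt_pow 2 x).const_mul (p / 2)).add ((hasDerivAt_id x).const_mul υ₁)).add_const υ₂
  exact h.congr_deriv (show (p / 2) * (2 * x ^ 1) + υ₁ * 1 = p * x + υ₁ by ring)

/-- explicit form of F -/
noncomputable def F0aux (a₁ a₂ p υ₁ υ₂ : ℝ) : ℝ → ℝ :=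
  fun x => (a₁ * (p * x + υ₁) + a₂) / ψrat p υ₁ υ₂ x

noncomputable def F1aux (a₁ a₂ p υ₁ υ₂ : ℝ) : ℝ → ℝ :=
  fun x => (a₁ * p * ψrat p υ₁ υ₂ x - (a₁ * (p * x + υ₁) + a₂) * (p * x + υ₁))
    / ψrat p υ₁ υ₂ x ^ 2

noncomputable def F2aux (a₁ a₂ p υ₁ υ₂ : ℝ) : ℝ → ℝ :=
  fun x => (-(a₁ * (p * x + υ₁) + a₂) * p * ψrat p υ₁ υ₂ x
      - 2 * a₁ * p * ψrat p υ₁ υ₂ x * (p * x + υ₁)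
      + 2 * (a₁ * (p * x + υ₁) + a₂) * (p * x + υ₁) ^ 2) / ψrat p υ₁ υ₂ x ^ 3

noncomputable def F3aux (a₁ a₂ p υ₁ υ₂ : ℝ) : ℝ → ℝ :=
  fun x => (-3 * a₁ * p ^ 2 * ψrat p υ₁ υ₂ x ^ 2
      + 6 * (a₁ * (p * x + υ₁) + a₂) * p * ψrat p υ₁ υ₂ x * (p * x + υ₁)
      + 6 * a₁ * p * ψrat p υ₁ υ₂ x * (p * x + υ₁) ^ 2
      - 6 * (a₁ * (p * x + υ₁) + a₂) * (p * x + υ₁) ^ 3) / ψrat p υ₁ υ₂ x ^ 4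

lemma F0_hasDeriv (a₁ a₂ p υ₁ υ₂ x : ℝ) (hs : ψrat p υ₁ υ₂ x ≠ 0) :
    HasDerivAt (F0aux a₁ a₂ p υ₁ υ₂) (F1aux a₁ a₂ p υ₁ υ₂ x) x := by
  have hN : HasDerivAt (fun y : ℝ => a₁ * (p * y + υ₁) + a₂) (a₁ * p) x := by
    have := (((hasDerivAt_id x).const_mul p).add_const υ₁).const_mul a₁
    simpa using this.add_const a₂ |>.congr_deriv (by ring)
  have := hN.div (ψrat_hasDeriv p υ₁ υ₂ x) hs
  refine this.congr_deriv ?_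
  simp only [F1aux]

lemma F1_hasDeriv (a₁ a₂ p υ₁ υ₂ x : ℝ) (hs : ψrat p υ₁ υ₂ x ≠ 0) :
    HasDerivAt (F1aux a₁ a₂ p υ₁ υ₂) (F2aux a₁ a₂ p υ₁ υ₂ x) x := by
  have hψ := ψrat_hasDeriv p υ₁ υ₂ x
  have hN : HasDerivAt (fun y : ℝ => a₁ * (p * y + υ₁) + a₂) (a₁ * p) x := by
    have := (((hasDerivAt_id x).const_mul p).add_const υ₁).const_mul a₁
    simpa using this.add_const a₂ |>.congr_deriv (by ring)
  have hd : HasDerivAt (fun y : ℝ => p * y + υ₁) p x := by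
    simpa using ((hasDerivAt_id x).const_mul p).add_const υ₁ |>.congr_deriv (by ring)
  have hM : HasDerivAt
      (fun y : ℝ => a₁ * p * ψrat p υ₁ υ₂ y - (a₁ * (p * y + υ₁) + a₂) * (p * y + υ₁))
      (a₁ * p * (p * x + υ₁) - ((a₁ * p) * (p * x + υ₁) + (a₁ * (p * x + υ₁) + a₂) * p)) x :=
    (hψ.const_mul (a₁ * p)).sub (hN.mul hd)
  have hS2 : HasDerivAt (fun y : ℝ => ψrat p υ₁ υ₂ y ^ 2)
      ((2 : ℕ) * ψrat p υ₁ υ₂ x ^ 1 * (p * x + υ₁)) x := hψ.pow 2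
  have hs2 : ψrat p υ₁ υ₂ x ^ 2 ≠ 0 := pow_ne_zero _ hs
  have := hM.div hS2 hs2
  refine this.congr_deriv ?_
  simp only [F2aux]
  field_simp
  ring

lemma F2_hasDeriv (a₁ a₂ p υ₁ υ₂ x : ℝ) (hs : ψrat p υ₁ υ₂ x ≠ 0) :
    HasDerivAt (F2aux a₁ a₂ p υ₁ υ₂) (F3aux a₁ a₂ p υ₁ υ₂ x) x := by
  have hψ := ψrat_hasDeriv p υ₁ υ₂ x
  have hN : HasDerivAt (fun y : ℝ => a₁ * (p * y + υ₁) + a₂) (a₁ * p) x := by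
    have := (((hasDerivAt_id x).const_mul p).add_const υ₁).const_mul a₁
    simpa using this.add_const a₂ |>.congr_deriv (by ring)
  have hd : HasDerivAt (fun y : ℝ => p * y + υ₁) p x := by
    simpa using ((hasDerivAt_id x).const_mul p).add_const υ₁ |>.congr_deriv (by ring)
  have hP := (((hN.neg.mul_const p).mul hψ).sub ((hψ.const_mul (2 * a₁ * p)).mul hd)).add
    ((hN.const_mul 2).mul (hd.pow 2))
  have hS3 : HasDerivAt (fun y : ℝ => ψrat p υ₁ υ₂ y ^ 3)
      ((3 : ℕ) * ψrat p υ₁ υ₂ x ^ 2 * (p * x + υ₁)) x := hψ.pow 3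
  have hs3 : ψrat p υ₁ υ₂ x ^ 3 ≠ 0 := pow_ne_zero _ hs
  have := hP.div hS3 hs3
  refine this.congr_deriv ?_
  simp only [F3aux]
  simp only [Pi.add_apply, Pi.sub_apply, Pi.mul_apply, Pi.neg_apply, Pi.pow_apply, Nat.cast_ofNat, Nat.reduceSub, pow_one]
  field_simp
  ring


set_option maxHeartbeats 1000000 in
/-- Case-iii of Section 4(I): the rational family solves the autonomous
steady ODE `(τ+α²)F‴ − (3/2)F′F² = 0` wherever `ψ ≠ 0`. -/
theorem wbk_rational_solution (α τ p υ₁ υ₂ : ℝ)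
    (hpos : α ^ 2 + τ ≥ 0) (hdisc : υ₁ ^ 2 - 2 * υ₂ * p ≥ 0) :
    ∀ x : ℝ, ψrat p υ₁ υ₂ x ≠ 0 →
      (τ + α ^ 2) * deriv (deriv (deriv (Frat α τ p υ₁ υ₂))) x
        - (3 / 2) * deriv (Frat α τ p υ₁ υ₂) x * (Frat α τ p υ₁ υ₂ x) ^ 2 = 0 := by
  set a₁ := Real.sqrt (α ^ 2 + τ) with ha₁def
  set a₂ := Real.sqrt ((α ^ 2 + τ) * (υ₁ ^ 2 - 2 * υ₂ * p)) with ha₂def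
  have hFeq : Frat α τ p υ₁ υ₂ = F0aux a₁ a₂ p υ₁ υ₂ := by
    funext y
    simp only [Frat, F0aux, (ψrat_hasDeriv p υ₁ υ₂ y).deriv, ← ha₁def, ← ha₂def]
    rw [← add_div]
  have hcont : Continuous (ψrat p υ₁ υ₂) := by
    unfold ψrat; continuity
  have hU : IsOpen {y : ℝ | ψrat p υ₁ υ₂ y ≠ 0} :=
    isOpen_compl_singleton.preimage hcont
  -- first derivative on U
  have hd1 : ∀ y, ψrat p υ₁ υ₂ y ≠ 0 → deriv (Frat α τ p υ₁ υ₂) y = F1aux a₁ a₂ p υ₁ υ₂ y := by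
    intro y hy
    rw [hFeq]
    exact (F0_hasDeriv a₁ a₂ p υ₁ υ₂ y hy).deriv
  have hd2 : ∀ y, ψrat p υ₁ υ₂ y ≠ 0 →
      deriv (deriv (Frat α τ p υ₁ υ₂)) y = F2aux a₁ a₂ p υ₁ υ₂ y := by
    intro y hy
    have hev : deriv (Frat α τ p υ₁ υ₂) =ᶠ[nhds y] F1aux a₁ a₂ p υ₁ υ₂ := by
      filter_upwards [hU.mem_nhds hy] with z hz using hd1 z hz
    rw [hev.deriv_eq]
    exact (F1_hasDeriv a₁ a₂ p υ₁ υ₂ y hy).deriv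
  have hd3 : ∀ y, ψrat p υ₁ υ₂ y ≠ 0 →
      deriv (deriv (deriv (Frat α τ p υ₁ υ₂))) y = F3aux a₁ a₂ p υ₁ υ₂ y := by
    intro y hy
    have hev : deriv (deriv (Frat α τ p υ₁ υ₂)) =ᶠ[nhds y] F2aux a₁ a₂ p υ₁ υ₂ := by
      filter_upwards [hU.mem_nhds hy] with z hz using hd2 z hz
    rw [hev.deriv_eq]
    exact (F2_hasDeriv a₁ a₂ p υ₁ υ₂ y hy).deriv
  intro x hs
  rw [hd3 x hs, hd1 x hs, hFeq]
  have ha1 : a₁ ^ 2 = α ^ 2 + τ := Real.sq_sqrt hpos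
  have ha2 : a₂ ^ 2 = (α ^ 2 + τ) * (υ₁ ^ 2 - 2 * υ₂ * p) :=
    Real.sq_sqrt (mul_nonneg hpos hdisc)
  simp only [F3aux, F1aux, F0aux]
  have hSval : ψrat p υ₁ υ₂ x = p / 2 * x ^ 2 + υ₁ * x + υ₂ := by simp [ψrat]
  have key : (τ + α ^ 2) *
        (-3 * a₁ * p ^ 2 * (p / 2 * x ^ 2 + υ₁ * x + υ₂) ^ 2
          + 6 * (a₁ * (p * x + υ₁) + a₂) * p * (p / 2 * x ^ 2 + υ₁ * x + υ₂) * (p * x + υ₁)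
          + 6 * a₁ * p * (p / 2 * x ^ 2 + υ₁ * x + υ₂) * (p * x + υ₁) ^ 2
          - 6 * (a₁ * (p * x + υ₁) + a₂) * (p * x + υ₁) ^ 3)
      - 3 / 2 * (a₁ * p * (p / 2 * x ^ 2 + υ₁ * x + υ₂)
          - (a₁ * (p * x + υ₁) + a₂) * (p * x + υ₁))
        * (a₁ * (p * x + υ₁) + a₂) ^ 2 = 0 := by
    linear_combination
      (-(-3 * a₁ * p ^ 2 * (p / 2 * x ^ 2 + υ₁ * x + υ₂) ^ 2
          + 6 * (a₁ * (p * x + υ₁) + a₂) * p * (p / 2 * x ^ 2 + υ₁ * x + υ₂) * (p * x + υ₁)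
          + 6 * a₁ * p * (p / 2 * x ^ 2 + υ₁ * x + υ₂) * (p * x + υ₁) ^ 2
          - 6 * (a₁ * (p * x + υ₁) + a₂) * (p * x + υ₁) ^ 3)
        + 3 / 2 * (υ₁ ^ 2 - 2 * υ₂ * p)
          * (a₁ * p * (p / 2 * x ^ 2 + υ₁ * x + υ₂) - 3 * a₁ * (p * x + υ₁) ^ 2
              - a₂ * (p * x + υ₁))) * ha1
      + (-(3 / 2) * (a₁ * p * (p / 2 * x ^ 2 + υ₁ * x + υ₂) - 3 * a₁ * (p * x + υ₁) ^ 2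
              - a₂ * (p * x + υ₁))) * ha2
  rw [← hSval] at key
  linear_combination key / ψrat p υ₁ υ₂ x ^ 4
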